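/- Let r be a nonzero real and Γ ≥ 1 an integer. For real θ, set t = e^θ, δ = t^{1/2} − t^{−1/2} = 2 sinh(θ/2) and μ = (t^{1/2} + t^{−1/2})/2 = cosh(θ/2). Then, for each choice of sign, as θ → 0, t^{±r} = 1 + Σ_{k=1}^{Γ} [∏_{l=0}^{k−1}(r² − l²)] · (±(2k/r) μ δ^{2k−1} + δ^{2k}) / (2k)! + O(θ^{2Γ+1}). In particular, truncating the patch coupling conditions at order Γ in the coupling parameter introduces errors of order θ^{2Γ+1}, i.e., of orders δ̄^{2(Γ+1)} and μ̄δ̄^{2Γ+1} in the macroscale operators. -/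

import Mathlib

open Asymptotics Filter

private noncomputable def Zf (θ : ℝ) : ℝ := 2 * Real.sinh (θ/2)

private noncomputable def Af (r : ℝ) (k : ℕ) : ℝ := ∏ l ∈ Finset.range k, (r ^ 2 - (l : ℝ) ^ 2)

private noncomputable def RR (r : ℝ) (Γ : ℕ) (θ : ℝ) : ℝ :=
  Real.cosh (r*θ) - (1 + ∑ k ∈ Finset.Icc 1 Γ, Af r k * Zf θ ^ (2*k) / ((2*k).factorial : ℝ))

private noncomputable def R1 (r : ℝ) (Γ : ℕ) (θ : ℝ) : ℝ :=
  r * Real.sinh (r*θ)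
    - ∑ k ∈ Finset.Icc 1 Γ,
        Af r k * (((2*k : ℕ) : ℝ) * Zf θ ^ (2*k-1) * Real.cosh (θ/2)) / ((2*k).factorial : ℝ)

private lemma hZf (θ : ℝ) : HasDerivAt Zf (Real.cosh (θ/2)) θ := by
  have h := ((Real.hasDerivAt_sinh (θ/2)).comp θ ((hasDerivAt_id θ).div_const 2)).const_mul 2
  refine h.congr_deriv ?_
  ring

private lemma hch (θ : ℝ) :
    HasDerivAt (fun x : ℝ => Real.cosh (x/2)) (Real.sinh (θ/2) * (1/2)) θ := by
  exact (Real.hasDerivAt_cosh (θ/2)).comp θ ((hasDerivAt_id θ).div_const 2)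

private lemma hrθ (r θ : ℝ) : HasDerivAt (fun x : ℝ => r * x) r θ := by
  simpa using (hasDerivAt_id θ).const_mul r

private lemma hRRder (r : ℝ) (Γ : ℕ) (θ : ℝ) : HasDerivAt (RR r Γ) (R1 r Γ θ) θ := by
  have hsum : HasDerivAt
      (fun θ => ∑ k ∈ Finset.Icc 1 Γ, Af r k * Zf θ ^ (2*k) / ((2*k).factorial : ℝ))
      (∑ k ∈ Finset.Icc 1 Γ,
        Af r k * (((2*k : ℕ) : ℝ) * Zf θ ^ (2*k-1) * Real.cosh (θ/2)) / ((2*k).factorial : ℝ)) θ :=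
    HasDerivAt.fun_sum fun k _ => (((hZf θ).pow (2*k)).const_mul (Af r k)).div_const _
  have h := (((Real.hasDerivAt_cosh (r*θ)).comp θ (hrθ r θ))).sub (hsum.const_add 1)
  refine h.congr_deriv ?_
  unfold R1
  ring

private lemma hR1der (r : ℝ) (Γ : ℕ) (θ : ℝ) :
    HasDerivAt (R1 r Γ)
      (r^2 * RR r Γ θ + (Af r (Γ+1) / ((2*Γ).factorial : ℝ)) * Zf θ ^ (2*Γ)) θ := by
  have hsum : HasDerivAt
      (fun θ => ∑ k ∈ Finset.Icc 1 Γ,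
        Af r k * (((2*k : ℕ) : ℝ) * Zf θ ^ (2*k-1) * Real.cosh (θ/2)) / ((2*k).factorial : ℝ))
      (∑ k ∈ Finset.Icc 1 Γ,
        Af r k * ((((2*k : ℕ) : ℝ) * (((2*k-1 : ℕ) : ℝ) * Zf θ ^ (2*k-1-1) * Real.cosh (θ/2))) * Real.cosh (θ/2)
          + ((2*k : ℕ) : ℝ) * Zf θ ^ (2*k-1) * (Real.sinh (θ/2) * (1/2))) / ((2*k).factorial : ℝ)) θ :=
    HasDerivAt.fun_sum fun k _ =>
      (((((hZf θ).pow (2*k-1)).const_mul (((2*k : ℕ) : ℝ))).mul (hch θ)).const_mul (Af r k)).div_const _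
  have h := (((Real.hasDerivAt_sinh (r*θ)).comp θ (hrθ r θ)).const_mul r).sub hsum
  refine h.congr_deriv ?_
  unfold RR
  have key : (∑ k ∈ Finset.Icc 1 Γ,
        Af r k * ((((2*k : ℕ) : ℝ) * (((2*k-1 : ℕ) : ℝ) * Zf θ ^ (2*k-1-1) * Real.cosh (θ/2))) * Real.cosh (θ/2)
          + ((2*k : ℕ) : ℝ) * Zf θ ^ (2*k-1) * (Real.sinh (θ/2) * (1/2))) / ((2*k).factorial : ℝ))
      = r^2 * (1 + ∑ k ∈ Finset.Icc 1 Γ, Af r k * Zf θ ^ (2*k) / ((2*k).factorial : ℝ))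
        - (Af r (Γ+1) / ((2*Γ).factorial : ℝ)) * Zf θ ^ (2*Γ) := by
    simp only [← Finset.Ico_add_one_right_eq_Icc 1 Γ, Finset.sum_Ico_eq_sum_range, Nat.add_sub_cancel, Nat.succ_sub_one]
    set S := Real.sinh (θ/2) with hS
    set M := Real.cosh (θ/2) with hMdef
    have hM : M ^ 2 = 1 + S ^ 2 := Real.cosh_sq' (θ/2)
    have hMrw : ∀ a b x : ℝ, (a * (b * x * M)) * M = a * b * x * (1 + S^2) := by
      intro a b x; rw [← hM]; ring
    have hZS : Zf θ = 2 * S := rfl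
    have key2 : ∀ i ∈ Finset.range Γ,
        Af r (1+i) * ((((2*(1+i) : ℕ) : ℝ) * (((2*(1+i)-1 : ℕ) : ℝ) * Zf θ ^ (2*(1+i)-1-1) * M)) * M
          + ((2*(1+i) : ℕ) : ℝ) * Zf θ ^ (2*(1+i)-1) * (S * (1/2))) / ((2*(1+i)).factorial : ℝ)
        = r^2 * (Af r (1+i) * Zf θ ^ (2*(1+i)) / ((2*(1+i)).factorial : ℝ))
          + ((Af r (1+i) * Zf θ ^ (2*i) / ((2*i).factorial : ℝ))
             - (Af r (1+(i+1)) * Zf θ ^ (2*(i+1)) / ((2*(i+1)).factorial : ℝ))) := by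
      intro i _
      have e1 : 2*(1+i) = 2*i+2 := by ring
      have e2 : 2*i+2-1 = 2*i+1 := by omega
      have e3 : 2*i+1-1 = 2*i := by omega
      have e5 : 1+(i+1) = i+2 := by omega
      have e6 : 2*(i+1) = 2*i+2 := by ring
      rw [e1, e2, e3, e5, e6]
      have hA : Af r (i+2) = Af r (i+1) * (r^2 - ((i:ℝ)+1)^2) := by
        unfold Af
        rw [Finset.prod_range_succ]
        push_cast
        ring
      have hfactR : ((2*i+2).factorial : ℝ)
          = ((2*i+2 : ℕ) : ℝ) * (((2*i+1 : ℕ) : ℝ) * ((2*i).factorial : ℝ)) := by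
        rw [show 2*i+2 = (2*i+1)+1 from rfl, Nat.factorial_succ]
        push_cast [Nat.factorial_succ]
        ring
      rw [hMrw, hZS, hA, hfactR, show (1:ℕ)+i = i+1 from by omega]
      have f1 : ((2*i).factorial : ℝ) ≠ 0 := Nat.cast_ne_zero.mpr (Nat.factorial_ne_zero _)
      have f2 : ((2*i+2 : ℕ) : ℝ) ≠ 0 := by positivity
      have f3 : ((2*i+1 : ℕ) : ℝ) ≠ 0 := by positivity
      field_simp
      push_cast
      ring
    rw [Finset.sum_congr rfl key2, Finset.sum_add_distrib, Finset.sum_range_sub'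
        (fun i => Af r (1+i) * Zf θ ^ (2*i) / ((2*i).factorial : ℝ)) Γ, ← Finset.mul_sum]
    have hA1 : Af r (1+0) = r^2 := by simp [Af]
    simp only [hA1]
    have : Zf θ ^ (2*0) = 1 := by norm_num
    rw [show (1:ℕ)+Γ = Γ+1 from by omega]
    simp only [Nat.mul_zero, pow_zero, Nat.factorial_zero]
    push_cast
    ring
  rw [key]
  ring

private lemma bootstrap {f f' : ℝ → ℝ} (h0 : f 0 = 0)
    (hd : ∀ x, HasDerivAt f (f' x) x) {j : ℕ}
    (h : f' =O[nhds 0] fun θ => θ ^ j) :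
    f =O[nhds 0] fun θ => θ ^ (j + 1) := by
  obtain ⟨C, hC, hbound⟩ := h.exists_pos
  rw [isBigOWith_iff] at hbound
  obtain ⟨δ, hδ, hball⟩ := Metric.eventually_nhds_iff_ball.mp hbound
  rw [isBigO_iff]
  refine ⟨C, Metric.eventually_nhds_iff_ball.mpr ⟨δ, hδ, fun θ hθ => ?_⟩⟩
  have hθδ : |θ| < δ := by simpa [Real.dist_eq] using hθ
  have key : ‖f θ - f 0‖ ≤ (C * |θ| ^ j) * ‖θ - 0‖ := by
    refine Convex.norm_image_sub_le_of_norm_hasDerivWithin_le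
      (f' := f') (s := Set.uIcc (0:ℝ) θ)
      (fun x _ => (hd x).hasDerivWithinAt) (fun x hx => ?_) (convex_uIcc _ _)
      Set.left_mem_uIcc Set.right_mem_uIcc
    have hxθ : |x| ≤ |θ| := by
      rcases Set.mem_uIcc.mp hx with ⟨h1, h2⟩ | ⟨h1, h2⟩
      · rw [abs_of_nonneg h1]
        exact h2.trans (le_abs_self θ)
      · rw [abs_of_nonpos h2]
        exact (neg_le_neg h1).trans (neg_le_abs θ)
    have hxball : x ∈ Metric.ball (0:ℝ) δ := by
      simp only [Metric.mem_ball, Real.dist_eq, sub_zero]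
      exact lt_of_le_of_lt hxθ hθδ
    calc ‖f' x‖ ≤ C * ‖x ^ j‖ := hball x hxball
    _ = C * |x| ^ j := by rw [norm_pow]; rfl
    _ ≤ C * |θ| ^ j := by
        exact mul_le_mul_of_nonneg_left (pow_le_pow_left₀ (abs_nonneg x) hxθ j) hC.le
  rw [h0, sub_zero] at key
  calc ‖f θ‖ ≤ (C * |θ| ^ j) * ‖θ - 0‖ := key
  _ = C * ‖θ ^ (j+1)‖ := by
      rw [sub_zero, norm_pow]
      show C * |θ|^j * |θ| = C * |θ|^(j+1)
      ring

private lemma pow_weaken {m n : ℕ} (h : m ≤ n) :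
    (fun θ : ℝ => θ ^ n) =O[nhds 0] fun θ => θ ^ m := by
  rw [isBigO_iff]
  refine ⟨1, ?_⟩
  have hball := Metric.ball_mem_nhds (0:ℝ) one_pos
  filter_upwards [hball] with θ hθ
  have hθ1 : |θ| ≤ 1 := by
    simp only [Metric.mem_ball, Real.dist_eq, sub_zero] at hθ
    exact hθ.le
  rw [one_mul]
  show |θ ^ n| ≤ |θ ^ m|
  rw [abs_pow, abs_pow]
  exact pow_le_pow_of_le_one (abs_nonneg θ) hθ1 h

private lemma RR_zero (r : ℝ) (Γ : ℕ) : RR r Γ 0 = 0 := by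
  unfold RR
  rw [Finset.sum_eq_zero]
  · simp
  · intro k hk
    have hk1 : 1 ≤ k := (Finset.mem_Icc.mp hk).1
    have : Zf 0 = 0 := by simp [Zf]
    rw [this, zero_pow (by omega)]
    simp

private lemma R1_zero (r : ℝ) (Γ : ℕ) : R1 r Γ 0 = 0 := by
  unfold R1
  rw [Finset.sum_eq_zero]
  · simp
  · intro k hk
    have hk1 : 1 ≤ k := (Finset.mem_Icc.mp hk).1
    have : Zf 0 = 0 := by simp [Zf]
    rw [this, zero_pow (by omega)]
    simp

private lemma Zf_pow_bigO (n : ℕ) : (fun θ => Zf θ ^ n) =O[nhds 0] fun θ : ℝ => θ ^ n := by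
  have h : Zf =O[nhds 0] (fun θ : ℝ => θ) := by
    have := (hZf 0).isBigO_sub
    exact (by simpa [Zf] using this : (fun x : ℝ => 2 * Real.sinh (x / 2)) =O[nhds 0] fun θ : ℝ => θ)
  simpa using h.pow n

private lemma RR_bigO_aux (r : ℝ) (Γ : ℕ) :
    ∀ i, i ≤ Γ → (RR r Γ) =O[nhds 0] fun θ => θ ^ (2*i) := by
  intro i
  induction i with
  | zero =>
    intro _
    have hc : ContinuousAt (RR r Γ) 0 := (hRRder r Γ 0).continuousAt
    have := isBigO_const_of_tendsto (c := (1:ℝ)) hc.tendsto one_ne_zero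
    simpa using this
  | succ i ih =>
    intro hle
    have hRRi := ih (by omega)
    have hd1 : (fun θ => r^2 * RR r Γ θ + (Af r (Γ+1) / ((2*Γ).factorial : ℝ)) * Zf θ ^ (2*Γ))
        =O[nhds 0] fun θ => θ ^ (2*i) := by
      refine (hRRi.const_mul_left (r^2)).add ?_
      exact (((Zf_pow_bigO (2*Γ)).trans (pow_weaken (by omega))).const_mul_left _)
    have hR1O : (R1 r Γ) =O[nhds 0] fun θ => θ ^ (2*i+1) :=
      bootstrap (R1_zero r Γ) (hR1der r Γ) hd1
    have hRRO : (RR r Γ) =O[nhds 0] fun θ => θ ^ (2*i+1+1) :=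
      bootstrap (RR_zero r Γ) (hRRder r Γ) hR1O
    have he : 2*(i+1) = 2*i+1+1 := by ring
    rw [he]
    exact hRRO

private lemma R1_final (r : ℝ) (Γ : ℕ) : (R1 r Γ) =O[nhds 0] fun θ => θ ^ (2*Γ+1) := by
  have hd1 : (fun θ => r^2 * RR r Γ θ + (Af r (Γ+1) / ((2*Γ).factorial : ℝ)) * Zf θ ^ (2*Γ))
      =O[nhds 0] fun θ => θ ^ (2*Γ) := by
    refine ((RR_bigO_aux r Γ Γ le_rfl).const_mul_left (r^2)).add ?_
    exact ((Zf_pow_bigO (2*Γ)).const_mul_left _)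
  exact bootstrap (R1_zero r Γ) (hR1der r Γ) hd1

private lemma RR_final (r : ℝ) (Γ : ℕ) : (RR r Γ) =O[nhds 0] fun θ => θ ^ (2*Γ+1) := by
  have := bootstrap (RR_zero r Γ) (hRRder r Γ) (R1_final r Γ)
  exact this.trans (pow_weaken (by omega))

/-- Let `r ≠ 0` be real and `Γ ≥ 1` an integer.  With `t = e^θ`,
`δ = t^{1/2} − t^{−1/2} = 2 sinh(θ/2)` and `μ = (t^{1/2} + t^{−1/2})/2 = cosh(θ/2)`, for
each choice of sign, as `θ → 0`,
`t^{±r} = 1 + ∑_{k=1}^{Γ} [∏_{l=0}^{k−1}(r² − l²)]·(±(2k/r) μ δ^{2k−1} + δ^{2k})/(2k)!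
          + O(θ^{2Γ+1})`.
In particular, truncating the patch coupling conditions at order `Γ` in the coupling
parameter introduces errors of order `θ^{2Γ+1}`, i.e. of orders `δ̄^{2(Γ+1)}` and
`μ̄δ̄^{2Γ+1}` in the macroscale operators. -/
theorem stmt18 (r : ℝ) (hr : r ≠ 0) (Γ : ℕ) (hΓ : 1 ≤ Γ) :
    (fun θ : ℝ =>
        Real.exp (r * θ)
          - (1 + ∑ k ∈ Finset.Icc 1 Γ,
              (∏ l ∈ Finset.range k, (r ^ 2 - (l : ℝ) ^ 2)) *
                ((2 * k / r) * Real.cosh (θ / 2) * (2 * Real.sinh (θ / 2)) ^ (2 * k - 1)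
                  + (2 * Real.sinh (θ / 2)) ^ (2 * k)) / ((2 * k).factorial : ℝ)))
      =O[nhds 0] (fun θ => θ ^ (2 * Γ + 1))
    ∧ (fun θ : ℝ =>
        Real.exp (-(r * θ))
          - (1 + ∑ k ∈ Finset.Icc 1 Γ,
              (∏ l ∈ Finset.range k, (r ^ 2 - (l : ℝ) ^ 2)) *
                (-(2 * k / r) * Real.cosh (θ / 2) * (2 * Real.sinh (θ / 2)) ^ (2 * k - 1)
                  + (2 * Real.sinh (θ / 2)) ^ (2 * k)) / ((2 * k).factorial : ℝ)))
      =O[nhds 0] (fun θ => θ ^ (2 * Γ + 1)) := by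
  have hdiv : (fun θ => R1 r Γ θ / r) =O[nhds 0] fun θ : ℝ => θ ^ (2*Γ+1) :=
    ((R1_final r Γ).const_mul_left r⁻¹).congr_left fun θ => by rw [inv_mul_eq_div]
  have hsplit : ∀ θ : ℝ, ∀ k ∈ Finset.Icc 1 Γ,
      (∏ l ∈ Finset.range k, (r ^ 2 - (l : ℝ) ^ 2)) *
          ((2 * k / r) * Real.cosh (θ / 2) * (2 * Real.sinh (θ / 2)) ^ (2 * k - 1)
            + (2 * Real.sinh (θ / 2)) ^ (2 * k)) / ((2 * k).factorial : ℝ)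
        = Af r k * Zf θ ^ (2*k) / ((2*k).factorial : ℝ)
          + (Af r k * (((2*k : ℕ) : ℝ) * Zf θ ^ (2*k-1) * Real.cosh (θ/2)) / ((2*k).factorial : ℝ)) / r := by
    intro θ k _
    have f1 : ((2*k).factorial : ℝ) ≠ 0 := Nat.cast_ne_zero.mpr (Nat.factorial_ne_zero _)
    unfold Af Zf
    field_simp
    push_cast
    ring
  have hsplit' : ∀ θ : ℝ, ∀ k ∈ Finset.Icc 1 Γ,
      (∏ l ∈ Finset.range k, (r ^ 2 - (l : ℝ) ^ 2)) *
          (-(2 * k / r) * Real.cosh (θ / 2) * (2 * Real.sinh (θ / 2)) ^ (2 * k - 1)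
            + (2 * Real.sinh (θ / 2)) ^ (2 * k)) / ((2 * k).factorial : ℝ)
        = Af r k * Zf θ ^ (2*k) / ((2*k).factorial : ℝ)
          - (Af r k * (((2*k : ℕ) : ℝ) * Zf θ ^ (2*k-1) * Real.cosh (θ/2)) / ((2*k).factorial : ℝ)) / r := by
    intro θ k _
    have f1 : ((2*k).factorial : ℝ) ≠ 0 := Nat.cast_ne_zero.mpr (Nat.factorial_ne_zero _)
    unfold Af Zf
    field_simp
    push_cast
    ring
  constructor
  · have heq : (fun θ : ℝ =>
        Real.exp (r * θ)
          - (1 + ∑ k ∈ Finset.Icc 1 Γ,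
              (∏ l ∈ Finset.range k, (r ^ 2 - (l : ℝ) ^ 2)) *
                ((2 * k / r) * Real.cosh (θ / 2) * (2 * Real.sinh (θ / 2)) ^ (2 * k - 1)
                  + (2 * Real.sinh (θ / 2)) ^ (2 * k)) / ((2 * k).factorial : ℝ)))
        = fun θ => RR r Γ θ + R1 r Γ θ / r := by
      funext θ
      rw [Finset.sum_congr rfl (hsplit θ), Finset.sum_add_distrib, ← Finset.sum_div,
        ← Real.cosh_add_sinh (r*θ)]
      unfold RR R1
      linear_combination (-(Real.sinh (r*θ))) * (div_self hr)
    rw [heq]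
    exact (RR_final r Γ).add hdiv
  · have heq : (fun θ : ℝ =>
        Real.exp (-(r * θ))
          - (1 + ∑ k ∈ Finset.Icc 1 Γ,
              (∏ l ∈ Finset.range k, (r ^ 2 - (l : ℝ) ^ 2)) *
                (-(2 * k / r) * Real.cosh (θ / 2) * (2 * Real.sinh (θ / 2)) ^ (2 * k - 1)
                  + (2 * Real.sinh (θ / 2)) ^ (2 * k)) / ((2 * k).factorial : ℝ)))
        = fun θ => RR r Γ θ - R1 r Γ θ / r := by
      funext θ
      rw [Finset.sum_congr rfl (hsplit' θ), Finset.sum_sub_distrib, ← Finset.sum_div,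
        ← Real.cosh_sub_sinh (r*θ)]
      unfold RR R1
      linear_combination (Real.sinh (r*θ)) * (div_self hr)
    rw [heq]
    exact (RR_final r Γ).sub hdiv
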